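/- If j₁ = j₂ = 0 and j₃ > 0, then the system b₁(b₂² − b₃²) = j₁, b₂(b₁² − b₃²) = j₂, b₃(b₁² + b₂²) = j₃ has exactly four real solutions, namely (ε₁ c, ε₂ c, c) for the four choices of signs ε₁, ε₂ ∈ {+1, −1}, where c = (j₃/2)^{1/3} (real cube root). -/
import Mathlib


/-- The real cube root. -/
noncomputable def cbrt (x : ℝ) : ℝ :=
  if 0 ≤ x then x ^ ((1 : ℝ) / 3) else -((-x) ^ ((1 : ℝ) / 3))

/-- If `j₁ = j₂ = 0` and `j₃ > 0`, the system `b₁(b₂² − b₃²) = j₁`,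
`b₂(b₁² − b₃²) = j₂`, `b₃(b₁² + b₂²) = j₃` has exactly four real solutions, namely
`(ε₁ c, ε₂ c, c)` for the four sign choices `ε₁, ε₂ ∈ {1, −1}`, where `c = (j₃/2)^{1/3}`. -/
theorem hyperbolic_cubic_j1_j2_zero (j₁ j₂ j₃ : ℝ)
    (h1 : j₁ = 0) (h2 : j₂ = 0) (h3 : 0 < j₃) :
    ∃ c : ℝ, c = cbrt (j₃ / 2) ∧
      {t : ℝ × ℝ × ℝ |
          t.1 * (t.2.1 ^ 2 - t.2.2 ^ 2) = j₁ ∧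
          t.2.1 * (t.1 ^ 2 - t.2.2 ^ 2) = j₂ ∧
          t.2.2 * (t.1 ^ 2 + t.2.1 ^ 2) = j₃} =
        {(c, c, c), (c, -c, c), (-c, c, c), (-c, -c, c)} ∧
      ({(c, c, c), (c, -c, c), (-c, c, c), (-c, -c, c)} : Set (ℝ × ℝ × ℝ)).ncard = 4 := by
  subst h1 h2
  have hhalf : (0:ℝ) < j₃ / 2 := by linarith
  set c : ℝ := (j₃ / 2) ^ ((1 : ℝ) / 3) with hcdef
  have hcpos : 0 < c := Real.rpow_pos_of_pos hhalf _
  have hc3 : c ^ 3 = j₃ / 2 := by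
    rw [hcdef, ← Real.rpow_natCast (_ ^ ((1:ℝ)/3)) 3, ← Real.rpow_mul hhalf.le]
    norm_num
  have hodd : Odd 3 := ⟨1, by norm_num⟩
  refine ⟨c, ?_, ?_, ?_⟩
  · rw [cbrt, if_pos hhalf.le]
  · ext ⟨b₁, b₂, b₃⟩
    simp only [Set.mem_setOf_eq, Set.mem_insert_iff, Set.mem_singleton_iff, Prod.mk.injEq]
    constructor
    · rintro ⟨e1, e2, e3⟩
      have hb3 : b₃ ≠ 0 := by rintro rfl; simp at e3; nlinarith
      have hb1 : b₁ ≠ 0 := by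
        rintro rfl
        have : b₂ = 0 := by
          rcases mul_eq_zero.1 e2 with h | h
          · exact h
          · exact absurd ((pow_eq_zero_iff (n := 2) (by norm_num)).1 (show b₃ ^ 2 = 0 by linarith)) hb3
        subst this; nlinarith
      have hb2 : b₂ ≠ 0 := by
        rintro rfl
        have : b₁ = 0 := by
          rcases mul_eq_zero.1 e1 with h | h
          · exact h
          · exact absurd ((pow_eq_zero_iff (n := 2) (by norm_num)).1 (show b₃ ^ 2 = 0 by linarith)) hb3
        subst this; nlinarith
      have h23 : b₂ ^ 2 = b₃ ^ 2 := by
        rcases mul_eq_zero.1 e1 with h | h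
        · exact absurd h hb1
        · linarith
      have h13 : b₁ ^ 2 = b₃ ^ 2 := by
        rcases mul_eq_zero.1 e2 with h | h
        · exact absurd h hb2
        · linarith
      have hs : 0 < b₁ ^ 2 + b₂ ^ 2 := by positivity
      have hb3pos : 0 < b₃ := by
        by_contra hle
        push_neg at hle
        nlinarith
      have hb3c : b₃ = c := (hodd.strictMono_pow (R := ℝ)).injective (by nlinarith)
      subst hb3c
      have H1 : b₁ = c ∨ b₁ = -c :=
        mul_self_eq_mul_self_iff.1 (by nlinarith)
      have H2 : b₂ = c ∨ b₂ = -c :=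
        mul_self_eq_mul_self_iff.1 (by nlinarith)
      rcases H1 with rfl | rfl <;> rcases H2 with rfl | rfl <;> tauto
    · rintro (⟨rfl, rfl, rfl⟩ | ⟨rfl, rfl, rfl⟩ | ⟨rfl, rfl, rfl⟩ | ⟨rfl, rfl, rfl⟩) <;>
        refine ⟨by ring, by ring, by nlinarith⟩
  · rw [Set.ncard_insert_of_notMem (by
        simp only [Set.mem_insert_iff, Set.mem_singleton_iff, Prod.mk.injEq]
        rintro (⟨_, h, _⟩ | ⟨h, _, _⟩ | ⟨h, _, _⟩) <;> linarith),
      Set.ncard_insert_of_notMem (by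
        simp only [Set.mem_insert_iff, Set.mem_singleton_iff, Prod.mk.injEq]
        rintro (⟨h, _, _⟩ | ⟨_, h, _⟩) <;> linarith),
      Set.ncard_insert_of_notMem (by
        simp only [Set.mem_singleton_iff, Prod.mk.injEq]
        rintro ⟨_, h, _⟩; linarith),
      Set.ncard_singleton]
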